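/- For real numbers a, b with 0 ≤ a < b and integer ν ≥ 1, the generalized Marcum Q-function satisfies Q_ν(a, b) ≥ e^{−b²/2}. -/

import Mathlib

set_option maxHeartbeats 1000000

open MeasureTheory

/-- Modified Bessel function of the first kind of integer order `n`. -/
noncomputable def besselI (n : ℕ) (x : ℝ) : ℝ :=
  ∑' m : ℕ, (x / 2) ^ (2 * m + n) / ((Nat.factorial m : ℝ) * (Nat.factorial (m + n) : ℝ))

/-- Generalized Marcum Q-function of order `ν`:
`Q_ν(a,b) = ∫_b^∞ x (x/a)^{ν-1} exp(-(x²+a²)/2) I_{ν-1}(ax) dx` for `a ≠ 0`,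
with the limiting value `Q_ν(0,b) = e^{-b²/2} ∑_{k=0}^{ν-1} b^{2k}/(2^k k!)`. -/
noncomputable def marcumQ (ν : ℕ) (a b : ℝ) : ℝ :=
  if a = 0 then
    Real.exp (-b ^ 2 / 2) * ∑ k ∈ Finset.range ν, b ^ (2 * k) / (2 ^ k * (Nat.factorial k : ℝ))
  else
    ∫ x in Set.Ioi b,
      x * (x / a) ^ (ν - 1) * Real.exp (-(x ^ 2 + a ^ 2) / 2) * besselI (ν - 1) (a * x)

namespace MarcumAux

open Real Set Filter Topology


-- factorial inequality
lemma fact_ineq (m n : ℕ) : ((2*m+n).factorial : ℝ) ≤ 2^(2*m+n) * (m.factorial * (m+n).factorial) := by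
  have h := Nat.add_choose_mul_factorial_mul_factorial m (m+n)
  have hch : (m + (m+n)).choose (m+n) ≤ 2 ^ (2*m+n) := by
    have h2 := Nat.sum_range_choose (2*m+n)
    have hmem : (m+n) ∈ Finset.range (2*m+n+1) := by simp; omega
    calc (m + (m+n)).choose (m+n) = (2*m+n).choose (m+n) := by ring_nf
      _ ≤ ∑ i ∈ Finset.range (2*m+n+1), (2*m+n).choose i :=
          Finset.single_le_sum (fun i _ => Nat.zero_le _) hmem
      _ = 2 ^ (2*m+n) := h2
  have : ((2*m+n).factorial) ≤ 2^(2*m+n) * (m.factorial * (m+n).factorial) := by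
    have : (m + (m+n)) = 2*m+n := by ring
    rw [← this] at hch ⊢
    rw [← h]
    calc (m + (m+n)).choose (m+n) * m.factorial * (m+n).factorial
        ≤ 2^(m+(m+n)) * m.factorial * (m+n).factorial := by
          exact Nat.mul_le_mul_right _ (Nat.mul_le_mul_right _ hch)
      _ = 2^(m+(m+n)) * (m.factorial * (m+n).factorial) := by ring
  exact_mod_cast this

lemma term_le (m n : ℕ) {y : ℝ} (hy : 0 ≤ y) :
    (y/2)^(2*m+n) / ((m.factorial : ℝ) * (m+n).factorial) ≤ y^(2*m+n) / (2*m+n).factorial := by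
  rw [div_pow, div_div]
  apply div_le_div_of_nonneg_left (pow_nonneg hy _) (by positivity)
  exact_mod_cast fact_ineq m n

lemma summable_sub (n : ℕ) (y : ℝ) : Summable (fun m : ℕ => y^(2*m+n) / (2*m+n).factorial) := by
  have := (Real.summable_pow_div_factorial y).comp_injective
    (i := fun m : ℕ => 2*m+n) (fun m₁ m₂ h => by dsimp only at h; omega)
  exact this

lemma besselI_summable (n : ℕ) (x : ℝ) :
    Summable (fun m : ℕ => (x/2)^(2*m+n) / ((m.factorial : ℝ) * (m+n).factorial)) := by
  apply Summable.of_norm_bounded (summable_sub n |x|)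
  intro m
  have : ‖(x/2)^(2*m+n) / ((m.factorial : ℝ) * (m+n).factorial)‖
      = (|x|/2)^(2*m+n) / ((m.factorial : ℝ) * (m+n).factorial) := by
    rw [norm_div, norm_pow, norm_div]
    simp [abs_of_nonneg, Nat.cast_nonneg]
  rw [this]
  exact term_le m n (abs_nonneg x)

lemma integrableOn_moment (k : ℕ) {c b : ℝ} (hc : 0 < c) (hb : 0 ≤ b) :
    IntegrableOn (fun x : ℝ => x^k * Real.exp (-c * x^2)) (Ioi b) := by
  have h := integrableOn_rpow_mul_exp_neg_mul_sq hc (s := (k : ℝ))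
    (lt_of_lt_of_le neg_one_lt_zero (Nat.cast_nonneg k))
  have h2 := h.mono_set (Ioi_subset_Ioi hb)
  apply h2.congr_fun ?_ measurableSet_Ioi
  intro x hx
  simp [Real.rpow_natCast]

lemma integrableOn_moment' (j : ℕ) {b : ℝ} (hb : 0 ≤ b) :
    IntegrableOn (fun x : ℝ => x^j * Real.exp (-x^2/2)) (Ioi b) := by
  have h := integrableOn_moment j (c := 1/2) (by norm_num) hb
  apply h.congr_fun ?_ measurableSet_Ioi
  intro x _
  have : -(1/2 : ℝ) * x^2 = -x^2/2 := by ring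
  simp only [this]

lemma tendsto_pow_mul_exp_sq (k : ℕ) :
    Tendsto (fun x : ℝ => x ^ (2*k) * Real.exp (-x^2/2)) atTop (𝓝 0) := by
  have h1 : Tendsto (fun x : ℝ => x^2/2) atTop atTop := by
    apply Tendsto.atTop_div_const (by norm_num)
    exact tendsto_pow_atTop (by norm_num)
  have h2 := (Real.tendsto_pow_mul_exp_neg_atTop_nhds_zero k).comp h1
  have h3 : Tendsto (fun x : ℝ => (2:ℝ)^k * ((x^2/2)^k * Real.exp (-(x^2/2)))) atTop (𝓝 0) := by
    simpa using h2.const_mul ((2:ℝ)^k)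
  apply h3.congr
  intro x
  rw [div_pow, pow_mul]
  have : -(x^2/2) = -x^2/2 := by ring
  rw [this]
  field_simp

lemma hasDerivAt_neg_sq_half (x : ℝ) : HasDerivAt (fun x : ℝ => -x^2/2) (-x) x := by
  have h := ((hasDerivAt_pow 2 x).neg).div_const 2
  refine h.congr_deriv ?_
  norm_num
  ring

lemma moment_ge (k : ℕ) {b : ℝ} (hb : 0 ≤ b) :
    2^k * (k.factorial : ℝ) * Real.exp (-b^2/2)
      ≤ ∫ x in Ioi b, x^(2*k+1) * Real.exp (-x^2/2) := by
  induction k with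
  | zero =>
    have heq : ∫ x in Ioi b, x^(2*0+1) * Real.exp (-x^2/2) = 0 - (-Real.exp (-b^2/2)) := by
      apply integral_Ioi_of_hasDerivAt_of_tendsto' (f := fun x => -Real.exp (-x^2/2))
      · intro x _
        have := ((hasDerivAt_neg_sq_half x).exp).neg
        convert this using 1
        · rfl
        simp [pow_succ]
        ring
      · have := integrableOn_moment' 1 hb
        apply this.congr_fun ?_ measurableSet_Ioi
        intro x _
        norm_num
      · have := (tendsto_pow_mul_exp_sq 0).neg
        simpa using this
    rw [heq]
    norm_num
  | succ k ih =>
    have hint : ∀ j : ℕ, IntegrableOn (fun x : ℝ => x^j * Real.exp (-x^2/2)) (Ioi b) :=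
      fun j => integrableOn_moment' j hb
    have key : ∫ x in Ioi b, (x^(2*k+3) * Real.exp (-x^2/2)
        - (2*k+2 : ℝ) * (x^(2*k+1) * Real.exp (-x^2/2)))
        = 0 - (-(b^(2*k+2) * Real.exp (-b^2/2))) := by
      apply integral_Ioi_of_hasDerivAt_of_tendsto'
        (f := fun x => -(x^(2*k+2) * Real.exp (-x^2/2)))
      · intro x _
        have hd1 : HasDerivAt (fun x : ℝ => x^(2*k+2)) ((2*k+2 : ℝ) * x^(2*k+1)) x := by
          have := hasDerivAt_pow (2*k+2) x
          refine this.congr_deriv ?_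
          push_cast
          ring
        have hd2 := (hasDerivAt_neg_sq_half x).exp
        have := (hd1.mul hd2).neg
        convert this using 1
        · rfl
        ring
      · apply Integrable.sub (hint (2*k+3))
        exact (hint (2*k+1)).const_mul _
      · have := (tendsto_pow_mul_exp_sq (k+1)).neg
        simp only [neg_zero] at this ⊢
        apply this.congr
        intro x
        have h4 : 2*(k+1) = 2*k+2 := by ring
        rw [h4]
    have hsplit : ∫ x in Ioi b, (x^(2*k+3) * Real.exp (-x^2/2)
        - (2*k+2 : ℝ) * (x^(2*k+1) * Real.exp (-x^2/2)))
        = (∫ x in Ioi b, x^(2*k+3) * Real.exp (-x^2/2))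
          - (2*k+2 : ℝ) * ∫ x in Ioi b, x^(2*k+1) * Real.exp (-x^2/2) := by
      rw [integral_sub (hint (2*k+3)) ((hint (2*k+1)).const_mul _), integral_const_mul]
    rw [hsplit] at key
    have hJk1 : ∫ x in Ioi b, x^(2*k+3) * Real.exp (-x^2/2)
        = b^(2*k+2) * Real.exp (-b^2/2)
          + (2*k+2 : ℝ) * ∫ x in Ioi b, x^(2*k+1) * Real.exp (-x^2/2) := by
      linarith
    have h3 : 2*(k+1)+1 = 2*k+3 := by ring
    rw [h3, hJk1]
    have hbpos : 0 ≤ b^(2*k+2) * Real.exp (-b^2/2) := by positivity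
    have hmul : (2*k+2 : ℝ) * (2^k * (k.factorial : ℝ) * Real.exp (-b^2/2))
        ≤ (2*k+2 : ℝ) * ∫ x in Ioi b, x^(2*k+1) * Real.exp (-x^2/2) :=
      mul_le_mul_of_nonneg_left ih (by positivity)
    have heq : 2^(k+1) * ((k+1).factorial : ℝ) * Real.exp (-b^2/2)
        = (2*k+2 : ℝ) * (2^k * (k.factorial : ℝ) * Real.exp (-b^2/2)) := by
      rw [Nat.factorial_succ]; push_cast; ring
    linarith


lemma besselI_nonneg (n : ℕ) {y : ℝ} (hy : 0 ≤ y) : 0 ≤ besselI n y :=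
  tsum_nonneg fun m => by positivity

lemma besselI_le_exp (n : ℕ) {y : ℝ} (hy : 0 ≤ y) : besselI n y ≤ Real.exp y := by
  have h1 : besselI n y ≤ ∑' m : ℕ, y^(2*m+n) / (2*m+n).factorial := by
    rw [besselI]
    exact Summable.tsum_le_tsum (fun m => term_le m n hy) (besselI_summable n y) (summable_sub n y)
  have hexp : Real.exp y = ∑' k : ℕ, y^k / k.factorial := by
    rw [Real.exp_eq_exp_ℝ]
    exact (NormedSpace.expSeries_div_hasSum_exp y).tsum_eq.symm
  have h2 : ∑' m : ℕ, y^(2*m+n) / (2*m+n).factorial ≤ ∑' k : ℕ, y^k / k.factorial := by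
    apply Summable.tsum_le_tsum_of_inj (fun m : ℕ => 2*m+n)
      (fun m₁ m₂ h => by dsimp only at h; omega)
      (fun c _ => by positivity) (fun m => le_rfl) (summable_sub n y)
      (Real.summable_pow_div_factorial y)
  rw [hexp]; exact h1.trans h2

lemma besselI_measurable (n : ℕ) : Measurable (besselI n) := by
  apply measurable_of_tendsto_metrizable
    (f := fun M x => ∑ m ∈ Finset.range M, (x/2)^(2*m+n) / ((m.factorial : ℝ) * (m+n).factorial))
  · intro M
    apply Finset.measurable_sum
    intro m _
    fun_prop
  · rw [tendsto_pi_nhds]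
    intro x
    exact (besselI_summable n x).hasSum.tendsto_sum_nat

end MarcumAux

open MarcumAux Real Set Filter Topology

/-- Cauchy–Schwarz lower bound on the Marcum Q-function:
for `0 ≤ a < b` and `ν ≥ 1`, `Q_ν(a, b) ≥ e^{-b²/2}`. -/
theorem marcumQ_ge_exp (ν : ℕ) (hν : 1 ≤ ν) (a b : ℝ) (ha : 0 ≤ a) (hab : a < b) :
    Real.exp (-b ^ 2 / 2) ≤ marcumQ ν a b := by
  by_cases ha0 : a = 0
  · subst ha0
    rw [marcumQ, if_pos rfl]
    have h1 : (1:ℝ) ≤ ∑ k ∈ Finset.range ν, b^(2*k)/(2^k * (k.factorial : ℝ)) := by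
      have h0 : (0:ℕ) ∈ Finset.range ν := Finset.mem_range.2 hν
      calc (1:ℝ) = b^(2*0)/(2^0 * ((0:ℕ).factorial : ℝ)) := by norm_num
        _ ≤ ∑ k ∈ Finset.range ν, b^(2*k)/(2^k * (k.factorial : ℝ)) :=
          Finset.single_le_sum (f := fun k => b^(2*k)/(2^k * (k.factorial:ℝ)))
            (fun i _ => div_nonneg (pow_nonneg (by linarith : (0:ℝ) ≤ b) _) (by positivity)) h0
    nlinarith [Real.exp_pos (-b^2/2)]
  · have ha' : 0 < a := lt_of_le_of_ne ha (Ne.symm ha0)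
    have hb : 0 < b := ha.trans_lt hab
    rw [marcumQ, if_neg ha0]
    set n := ν - 1 with hn
    set f : ℝ → ℝ := fun x =>
      x * (x / a) ^ n * Real.exp (-(x ^ 2 + a ^ 2) / 2) * besselI n (a * x) with hf
    set g : ℕ → ℝ → ℝ := fun m x =>
      x * (x / a) ^ n * Real.exp (-(x ^ 2 + a ^ 2) / 2)
        * ((a * x / 2) ^ (2*m+n) / ((m.factorial : ℝ) * (m+n).factorial)) with hg
    set K : ℕ → ℝ := fun m =>
      a^(2*m) * Real.exp (-a^2/2) / (2^(2*m+n) * ((m.factorial : ℝ) * (m+n).factorial)) with hK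
    set c : ℕ → ℝ := fun m =>
      Real.exp (-a^2/2) * Real.exp (-b^2/2) * ((a^2/2)^m / (m.factorial : ℝ)) with hc
    have hfac : ∀ m : ℕ, (0:ℝ) < (m.factorial : ℝ) := fun m => by
      exact_mod_cast m.factorial_pos
    -- pointwise identity for g
    have hgK : ∀ m : ℕ, ∀ x ∈ Ioi b, g m x = K m * (x^(2*(m+n)+1) * Real.exp (-x^2/2)) := by
      intro m x hx
      have hx0 : 0 < x := hb.trans hx
      have hexp : Real.exp (-(x^2+a^2)/2) = Real.exp (-x^2/2) * Real.exp (-a^2/2) := by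
        rw [← Real.exp_add]; congr 1; ring
      rw [hg, hK]
      simp only
      simp only [hexp, div_pow, mul_pow]
      field_simp
      ring
    have hK0 : ∀ m, 0 ≤ K m := fun m => by
      rw [hK]; positivity
    -- integrability of each g m
    have hInt_g : ∀ m : ℕ, IntegrableOn (g m) (Ioi b) := by
      intro m
      have h1 : IntegrableOn (fun x : ℝ => K m * (x^(2*(m+n)+1) * Real.exp (-x^2/2))) (Ioi b) :=
        (integrableOn_moment' (2*(m+n)+1) hb.le).const_mul _
      exact h1.congr_fun (fun x hx => (hgK m x hx).symm) measurableSet_Ioi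
    -- integrability of f
    have hmeasf : Measurable f := by
      apply Measurable.mul
      · apply Measurable.mul
        · exact measurable_id.mul ((measurable_id.div_const a).pow_const n)
        · fun_prop
      · exact (besselI_measurable n).comp (measurable_id.const_mul a)
    have hInt_f : IntegrableOn f (Ioi b) := by
      have hD : IntegrableOn
          (fun x : ℝ => (Real.exp (a^2/2) / a^n) * (x^(n+1) * Real.exp (-(1/4 : ℝ) * x^2)))
          (Ioi b) :=
        (integrableOn_moment (n+1) (by norm_num) hb.le).const_mul _
      apply Integrable.mono' hD (hmeasf.aestronglyMeasurable)
      filter_upwards [ae_restrict_mem measurableSet_Ioi] with x hx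
      have hx0 : 0 < x := hb.trans hx
      have hC : 0 ≤ x * (x / a) ^ n * Real.exp (-(x^2+a^2)/2) := by positivity
      have hB0 : 0 ≤ besselI n (a*x) := besselI_nonneg n (by positivity)
      rw [Real.norm_eq_abs, hf]
      simp only
      rw [abs_of_nonneg (mul_nonneg hC hB0)]
      have h1 : besselI n (a*x) ≤ Real.exp (a*x) := besselI_le_exp n (by positivity)
      have h2 : Real.exp (a*x) ≤ Real.exp (x^2/4 + a^2) := by
        apply Real.exp_le_exp.2
        nlinarith [sq_nonneg (x/2 - a)]
      calc x * (x / a) ^ n * Real.exp (-(x^2+a^2)/2) * besselI n (a*x)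
          ≤ x * (x / a) ^ n * Real.exp (-(x^2+a^2)/2) * Real.exp (x^2/4 + a^2) :=
            mul_le_mul_of_nonneg_left (h1.trans h2) hC
        _ = (Real.exp (a^2/2) / a^n) * (x^(n+1) * Real.exp (-(1/4 : ℝ) * x^2)) := by
            rw [mul_assoc, ← Real.exp_add, div_pow,
              show (-(x^2+a^2)/2 + (x^2/4 + a^2)) = a^2/2 + (-(1/4 : ℝ)*x^2) by ring,
              Real.exp_add, pow_succ]
            field_simp
            ring
    -- pointwise partial sums below f
    have hpoint : ∀ M : ℕ, ∀ x ∈ Ioi b, (∑ m ∈ Finset.range M, g m x) ≤ f x := by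
      intro M x hx
      have hx0 : 0 < x := hb.trans hx
      have hC : 0 ≤ x * (x / a) ^ n * Real.exp (-(x^2+a^2)/2) := by positivity
      have hsum : ∑ m ∈ Finset.range M,
          (a*x/2)^(2*m+n) / ((m.factorial : ℝ) * (m+n).factorial) ≤ besselI n (a*x) := by
        rw [besselI]
        exact Summable.sum_le_tsum (Finset.range M) (fun m _ => by positivity) (besselI_summable n (a*x))
      have : ∑ m ∈ Finset.range M, g m x
          = (x * (x / a) ^ n * Real.exp (-(x^2+a^2)/2)) * ∑ m ∈ Finset.range M,
            (a*x/2)^(2*m+n) / ((m.factorial : ℝ) * (m+n).factorial) := by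
        rw [Finset.mul_sum]
      rw [this, hf]
      exact mul_le_mul_of_nonneg_left hsum hC
    -- value bound for each g m
    have hval : ∀ m : ℕ, c m ≤ ∫ x in Ioi b, g m x := by
      intro m
      have h1 : ∫ x in Ioi b, g m x
          = K m * ∫ x in Ioi b, x^(2*(m+n)+1) * Real.exp (-x^2/2) := by
        rw [setIntegral_congr_fun measurableSet_Ioi (fun x hx => hgK m x hx), integral_const_mul]
      have h2 : K m * (2^(m+n) * ((m+n).factorial : ℝ) * Real.exp (-b^2/2))
          ≤ K m * ∫ x in Ioi b, x^(2*(m+n)+1) * Real.exp (-x^2/2) :=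
        mul_le_mul_of_nonneg_left (moment_ge (m+n) hb.le) (hK0 m)
      have h3 : c m = K m * (2^(m+n) * ((m+n).factorial : ℝ) * Real.exp (-b^2/2)) := by
        rw [hc, hK]
        simp only
        rw [show 2*m+n = m + (m+n) by ring, pow_add (a := (2:ℝ)), pow_mul]
        have hfm := hfac m
        have hfmn := hfac (m+n)
        field_simp
        ring_nf
        rw [mul_assoc, ← mul_pow]; norm_num
      rw [h1, h3]
      exact h2
    -- partial sums bound the integral
    have hfinal : ∀ M : ℕ, ∑ m ∈ Finset.range M, c m ≤ ∫ x in Ioi b, f x := by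
      intro M
      have h1 : ∑ m ∈ Finset.range M, c m ≤ ∑ m ∈ Finset.range M, ∫ x in Ioi b, g m x :=
        Finset.sum_le_sum (fun m _ => hval m)
      have h2 : ∑ m ∈ Finset.range M, ∫ x in Ioi b, g m x
          = ∫ x in Ioi b, ∑ m ∈ Finset.range M, g m x :=
        (integral_finset_sum _ (fun m _ => hInt_g m)).symm
      have h3 : ∫ x in Ioi b, (∑ m ∈ Finset.range M, g m x) ≤ ∫ x in Ioi b, f x :=
        setIntegral_mono_on (integrable_finset_sum _ (fun m _ => hInt_g m)) hInt_f
          measurableSet_Ioi (hpoint M)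
      linarith
    -- sum of c equals e^{-b²/2}
    have hcsum : HasSum c (Real.exp (-b^2/2)) := by
      have h := (NormedSpace.expSeries_div_hasSum_exp (a^2/2)).mul_left
        (Real.exp (-a^2/2) * Real.exp (-b^2/2))
      have hv : Real.exp (-a^2/2) * Real.exp (-b^2/2) * NormedSpace.exp (a^2/2)
          = Real.exp (-b^2/2) := by
        rw [← Real.exp_eq_exp_ℝ, ← Real.exp_add, ← Real.exp_add]
        congr 1
        ring
      rw [hv] at h
      exact h
    exact le_of_tendsto hcsum.tendsto_sum_nat (Eventually.of_forall hfinal)
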